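/- Assume m, n ∈ ℤ^N satisfy the divergence-free constraints Σ_{α=1}^N m_α = 0 and Σ_{α=1}^N n_α = 0, and write m̃_j := m_j − m_{j+1}, ñ_j := n_j − n_{j+1}. Then, as operators on smooth functions ℝ^N → ℂ, the following commutation relations hold: (i) [T̃^j_m, T̃^k_n] = −i( m̃_k T̃^j_{m+n} − ñ_j T̃^k_{m+n} ) for 1 ≤ j, k ≤ N−1; (ii) [T̃^j_m, T̃^N_n] = i ñ_j T̃^N_{m+n} for 1 ≤ j ≤ N−1; (iii) [T̃^N_m, T̃^N_n] = 0; where [A,B]f := A(Bf) − B(Af). Thus the 'temporal' generators T̃^N span an Abelian ideal on which the 'spatial' diffeomorphisms T̃^j act semi-directly (eq. (38) of the paper, in the compact realization). -/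

import Mathlib

/-!
STATEMENT 11: Splitting of the divergence-free diffeomorphism algebra into
"spatial" generators T̃^j_m = D^j_m − D^{j+1}_m and the Abelian "temporal" ideal
T̃^N_m = Σ_α D^α_m (eq. (38) of the paper, compact realization):
(i)  [T̃^j_m, T̃^k_n] = −i(m̃_k T̃^j_{m+n} − ñ_j T̃^k_{m+n}),
(ii) [T̃^j_m, T̃^N_n] = i ñ_j T̃^N_{m+n},
(iii)[T̃^N_m, T̃^N_n] = 0,
for m, n ∈ ℤ^N with Σ m_α = 0 = Σ n_α, where m̃_j = m_j − m_{j+1}.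
-/

open scoped BigOperators

noncomputable section

/-- The plane-wave basis vector field `(D^α_m f)(y) := e^{i m·y} (∂f/∂y_α)(y)`. -/
def Dop {N : ℕ} (m : Fin N → ℤ) (α : Fin N) (f : (Fin N → ℝ) → ℂ) : (Fin N → ℝ) → ℂ :=
  fun y => Complex.exp (Complex.I * ∑ β, (m β : ℂ) * (y β : ℂ)) *
    fderiv ℝ f y (Pi.single α 1)

/-- The spatial generator `T̃^j_m := D^j_m − D^{j+1}_m`, `j = 1, …, N−1`. -/
def Tsp {M : ℕ} (m : Fin (M + 1) → ℤ) (j : Fin M)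
    (f : (Fin (M + 1) → ℝ) → ℂ) : (Fin (M + 1) → ℝ) → ℂ :=
  fun y => Dop m j.castSucc f y - Dop m j.succ f y

/-- The temporal generator `T̃^N_m := Σ_{α=1}^N D^α_m`. -/
def Ttm {M : ℕ} (m : Fin (M + 1) → ℤ)
    (f : (Fin (M + 1) → ℝ) → ℂ) : (Fin (M + 1) → ℝ) → ℂ :=
  fun y => ∑ α, Dop m α f y

namespace DiffeoSplit

variable {N : ℕ}

/-- phase function -/
def Eph (m : Fin N → ℤ) : (Fin N → ℝ) → ℂ :=
  fun y => Complex.exp (Complex.I * ∑ β, (m β : ℂ) * (y β : ℂ))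

/-- the linear part as a CLM -/
def Lm (m : Fin N → ℤ) : (Fin N → ℝ) →L[ℝ] ℂ :=
  ∑ β, (Complex.I * (m β : ℂ)) • (Complex.ofRealCLM.comp (ContinuousLinearMap.proj β))

lemma Lm_apply (m : Fin N → ℤ) (v : Fin N → ℝ) :
    Lm m v = Complex.I * ∑ β, (m β : ℂ) * (v β : ℂ) := by
  simp [Lm, ContinuousLinearMap.sum_apply, Finset.mul_sum, mul_assoc]

lemma Lm_single (m : Fin N → ℤ) (α : Fin N) :
    Lm m (Pi.single α 1) = Complex.I * (m α : ℂ) := by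
  rw [Lm_apply]
  congr 1
  rw [Finset.sum_eq_single α]
  · simp
  · intro b _ hb; simp [Pi.single_apply, hb]
  · simp

lemma hasFDerivAt_Eph (m : Fin N → ℤ) (y : Fin N → ℝ) :
    HasFDerivAt (Eph m) (Eph m y • Lm m) y := by
  have h : HasFDerivAt (fun z => Complex.I * ∑ β, (m β : ℂ) * (z β : ℂ)) (Lm m) y := by
    have := (Lm m).hasFDerivAt (x := y)
    convert this using 1
    ext z
    rw [Lm_apply]
  exact h.cexp

lemma contDiff_Eph (m : Fin N → ℤ) : ContDiff ℝ (⊤ : ℕ∞) (Eph m) := by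
  have : Eph m = fun y => Complex.exp (Lm m y) := by
    funext y; rw [Eph, Lm_apply]
  rw [this]
  exact Complex.contDiff_exp.comp (Lm m).contDiff

lemma Dop_eq (m : Fin N → ℤ) (α : Fin N) (f : (Fin N → ℝ) → ℂ) :
    Dop m α f = fun y => Eph m y * fderiv ℝ f y (Pi.single α 1) := rfl

lemma contDiff_fderiv_apply {f : (Fin N → ℝ) → ℂ} (hf : ContDiff ℝ (⊤ : ℕ∞) f)
    (v : Fin N → ℝ) : ContDiff ℝ (⊤ : ℕ∞) (fun y => fderiv ℝ f y v) :=
  (hf.fderiv_right (m := (⊤ : ℕ∞)) (by simp)).clm_apply contDiff_const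

lemma contDiff_Dop {f : (Fin N → ℝ) → ℂ} (hf : ContDiff ℝ (⊤ : ℕ∞) f)
    (m : Fin N → ℤ) (α : Fin N) : ContDiff ℝ (⊤ : ℕ∞) (Dop m α f) := by
  rw [Dop_eq]
  exact (contDiff_Eph m).mul (contDiff_fderiv_apply hf _)

lemma Eph_add (m n : Fin N → ℤ) (y : Fin N → ℝ) :
    Eph (m + n) y = Eph m y * Eph n y := by
  rw [Eph, Eph, Eph, ← Complex.exp_add, ← mul_add, ← Finset.sum_add_distrib]
  exact congrArg Complex.exp
    (congrArg _ (Finset.sum_congr rfl fun β _ => by rw [Pi.add_apply]; push_cast; ring))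

/-- Key computation. -/
lemma Dop_Dop {f : (Fin N → ℝ) → ℂ} (hf : ContDiff ℝ (⊤ : ℕ∞) f)
    (m n : Fin N → ℤ) (α β : Fin N) (y : Fin N → ℝ) :
    Dop m α (Dop n β f) y =
      Eph m y * Eph n y *
        (Complex.I * (n α : ℂ) * fderiv ℝ f y (Pi.single β 1) +
          fderiv ℝ (fderiv ℝ f) y (Pi.single α 1) (Pi.single β 1)) := by
  have hF : DifferentiableAt ℝ (fun z => fderiv ℝ f z (Pi.single β 1)) y :=
    ((contDiff_fderiv_apply hf _).differentiable (by simp)) y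
  have hE : DifferentiableAt ℝ (Eph n) y := (hasFDerivAt_Eph n y).differentiableAt
  have h1 : fderiv ℝ (fun z => Eph n z * fderiv ℝ f z (Pi.single β 1)) y (Pi.single α 1)
      = Eph n y * (fderiv ℝ (fun z => fderiv ℝ f z (Pi.single β 1)) y (Pi.single α 1))
        + fderiv ℝ f y (Pi.single β 1) * (fderiv ℝ (Eph n) y (Pi.single α 1)) := by
    rw [fderiv_fun_mul hE hF]
    simp [smul_eq_mul]
  have h2 : fderiv ℝ (Eph n) y (Pi.single α 1) = Eph n y * (Complex.I * (n α : ℂ)) := by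
    rw [(hasFDerivAt_Eph n y).fderiv]
    simp [Lm_single, smul_eq_mul]
  have h3 : fderiv ℝ (fun z => fderiv ℝ f z (Pi.single β 1)) y (Pi.single α 1)
      = fderiv ℝ (fderiv ℝ f) y (Pi.single α 1) (Pi.single β 1) := by
    have hc : DifferentiableAt ℝ (fderiv ℝ f) y :=
      ((hf.fderiv_right (m := (⊤ : ℕ∞)) (by simp)).differentiable (by simp)) y
    rw [fderiv_clm_apply hc (differentiableAt_const _)]
    simp
  rw [Dop_eq, Dop_eq]
  simp only []
  rw [h1, h2, h3]
  ring

lemma sndDeriv_symm {f : (Fin N → ℝ) → ℂ} (hf : ContDiff ℝ (⊤ : ℕ∞) f)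
    (y v w : Fin N → ℝ) :
    fderiv ℝ (fderiv ℝ f) y v w = fderiv ℝ (fderiv ℝ f) y w v := by
  exact (hf.contDiffAt.isSymmSndFDerivAt (by simp; exact (WithTop.coe_le_coe.mpr (le_top : (2 : ℕ∞) ≤ ⊤)))) v w

/-- Commutator of two Dop's. -/
lemma Dop_comm {f : (Fin N → ℝ) → ℂ} (hf : ContDiff ℝ (⊤ : ℕ∞) f)
    (m n : Fin N → ℤ) (α β : Fin N) (y : Fin N → ℝ) :
    Dop m α (Dop n β f) y - Dop n β (Dop m α f) y =
      Complex.I * (n α : ℂ) * Dop (m + n) β f y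
        - Complex.I * (m β : ℂ) * Dop (m + n) α f y := by
  rw [Dop_Dop hf m n α β y, Dop_Dop hf n m β α y, Dop_eq, Dop_eq]
  simp only [Eph_add]
  rw [sndDeriv_symm hf y (Pi.single β 1) (Pi.single α 1)]
  ring

lemma Dop_sub {g h : (Fin N → ℝ) → ℂ} {y : Fin N → ℝ}
    (hg : DifferentiableAt ℝ g y) (hh : DifferentiableAt ℝ h y)
    (m : Fin N → ℤ) (α : Fin N) :
    Dop m α (fun z => g z - h z) y = Dop m α g y - Dop m α h y := by
  simp only [Dop]
  rw [fderiv_fun_sub hg hh]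
  simp [mul_sub]

lemma Dop_sum {ι : Type*} (s : Finset ι) {g : ι → (Fin N → ℝ) → ℂ} {y : Fin N → ℝ}
    (hg : ∀ i ∈ s, DifferentiableAt ℝ (g i) y)
    (m : Fin N → ℤ) (α : Fin N) :
    Dop m α (fun z => ∑ i ∈ s, g i z) y = ∑ i ∈ s, Dop m α (g i) y := by
  simp only [Dop]
  rw [fderiv_fun_sum hg]
  simp [Finset.mul_sum]

end DiffeoSplit

open DiffeoSplit

theorem spatial_temporal_splitting {M : ℕ} (m n : Fin (M + 1) → ℤ)
    (hm : ∑ α, m α = 0) (hn : ∑ α, n α = 0) :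
    (∀ j k : Fin M, ∀ f : (Fin (M + 1) → ℝ) → ℂ, ContDiff ℝ (⊤ : ℕ∞) f →
      ∀ y : Fin (M + 1) → ℝ,
        Tsp m j (Tsp n k f) y - Tsp n k (Tsp m j f) y =
          -Complex.I * (((m k.castSucc - m k.succ : ℤ) : ℂ) * Tsp (m + n) j f y -
            ((n j.castSucc - n j.succ : ℤ) : ℂ) * Tsp (m + n) k f y)) ∧
    (∀ j : Fin M, ∀ f : (Fin (M + 1) → ℝ) → ℂ, ContDiff ℝ (⊤ : ℕ∞) f →
      ∀ y : Fin (M + 1) → ℝ,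
        Tsp m j (Ttm n f) y - Ttm n (Tsp m j f) y =
          Complex.I * ((n j.castSucc - n j.succ : ℤ) : ℂ) * Ttm (m + n) f y) ∧
    (∀ f : (Fin (M + 1) → ℝ) → ℂ, ContDiff ℝ (⊤ : ℕ∞) f →
      ∀ y : Fin (M + 1) → ℝ,
        Ttm m (Ttm n f) y - Ttm n (Ttm m f) y = 0) := by
  have hmC : (∑ α, (m α : ℂ)) = 0 := by exact_mod_cast hm
  have hnC : (∑ α, (n α : ℂ)) = 0 := by exact_mod_cast hn
  have hTsp : ∀ (p : Fin (M + 1) → ℤ) (l : Fin M) (g : (Fin (M + 1) → ℝ) → ℂ),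
      Tsp p l g = fun z => Dop p l.castSucc g z - Dop p l.succ g z := fun _ _ _ => rfl
  have hTtm : ∀ (p : Fin (M + 1) → ℤ) (g : (Fin (M + 1) → ℝ) → ℂ),
      Ttm p g = fun z => ∑ α, Dop p α g z := fun _ _ => rfl
  refine ⟨?_, ?_, ?_⟩
  · -- (i) spatial-spatial
    intro j k f hf y
    have hD : ∀ (p : Fin (M + 1) → ℤ) (α : Fin (M + 1)), DifferentiableAt ℝ (Dop p α f) y :=
      fun p α => ((contDiff_Dop hf p α).differentiable (by simp)) y
    simp only [hTsp]
    rw [Dop_sub (hD n k.castSucc) (hD n k.succ), Dop_sub (hD n k.castSucc) (hD n k.succ),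
        Dop_sub (hD m j.castSucc) (hD m j.succ), Dop_sub (hD m j.castSucc) (hD m j.succ)]
    have C := fun α β => Dop_comm hf m n α β y
    push_cast
    linear_combination C j.castSucc k.castSucc - C j.castSucc k.succ
      - C j.succ k.castSucc + C j.succ k.succ
  · -- (ii) spatial-temporal
    intro j f hf y
    have hD : ∀ (p : Fin (M + 1) → ℤ) (α : Fin (M + 1)), DifferentiableAt ℝ (Dop p α f) y :=
      fun p α => ((contDiff_Dop hf p α).differentiable (by simp)) y
    simp only [hTsp, hTtm]
    rw [Dop_sum Finset.univ (fun β _ => hD n β) m j.castSucc,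
        Dop_sum Finset.univ (fun β _ => hD n β) m j.succ]
    have h2 : ∀ β : Fin (M + 1),
        Dop n β (fun z => Dop m j.castSucc f z - Dop m j.succ f z) y
          = Dop n β (Dop m j.castSucc f) y - Dop n β (Dop m j.succ f) y :=
      fun β => Dop_sub (hD m j.castSucc) (hD m j.succ) n β
    simp only [h2]
    rw [← Finset.sum_sub_distrib, ← Finset.sum_sub_distrib]
    have key : ∀ β : Fin (M + 1),
        Dop m j.castSucc (Dop n β f) y - Dop m j.succ (Dop n β f) y
          - (Dop n β (Dop m j.castSucc f) y - Dop n β (Dop m j.succ f) y)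
        = (Complex.I * (n j.castSucc : ℂ) - Complex.I * (n j.succ : ℂ)) * Dop (m + n) β f y
          - (m β : ℂ) * (Complex.I * Dop (m + n) j.castSucc f y
              - Complex.I * Dop (m + n) j.succ f y) := fun β => by
      linear_combination Dop_comm hf m n j.castSucc β y - Dop_comm hf m n j.succ β y
    simp only [key]
    rw [Finset.sum_sub_distrib, ← Finset.mul_sum, ← Finset.sum_mul, hmC]
    push_cast
    ring
  · -- (iii) temporal-temporal
    intro f hf y
    have hD : ∀ (p : Fin (M + 1) → ℤ) (α : Fin (M + 1)), DifferentiableAt ℝ (Dop p α f) y :=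
      fun p α => ((contDiff_Dop hf p α).differentiable (by simp)) y
    simp only [hTtm]
    have h1 : ∀ α : Fin (M + 1),
        Dop m α (fun z => ∑ β, Dop n β f z) y = ∑ β, Dop m α (Dop n β f) y :=
      fun α => Dop_sum Finset.univ (fun β _ => hD n β) m α
    have h2 : ∀ β : Fin (M + 1),
        Dop n β (fun z => ∑ α, Dop m α f z) y = ∑ α, Dop n β (Dop m α f) y :=
      fun β => Dop_sum Finset.univ (fun α _ => hD m α) n β
    simp only [h1, h2]
    rw [show (∑ β : Fin (M + 1), ∑ α : Fin (M + 1), Dop n β (Dop m α f) y)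
          = ∑ α : Fin (M + 1), ∑ β : Fin (M + 1), Dop n β (Dop m α f) y from Finset.sum_comm,
        ← Finset.sum_sub_distrib]
    simp only [← Finset.sum_sub_distrib]
    have key : ∀ α β : Fin (M + 1),
        Dop m α (Dop n β f) y - Dop n β (Dop m α f) y
          = Complex.I * (n α : ℂ) * Dop (m + n) β f y
            - Complex.I * (m β : ℂ) * Dop (m + n) α f y := fun α β => Dop_comm hf m n α β y
    simp only [key]
    simp only [Finset.sum_sub_distrib, ← Finset.mul_sum]
    have e2 : ∀ α : Fin (M + 1),
        (∑ β, Complex.I * (m β : ℂ) * Dop (m + n) α f y)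
          = Complex.I * (∑ β, (m β : ℂ)) * Dop (m + n) α f y := fun α => by
      rw [Finset.mul_sum, Finset.sum_mul]
    have e1 : ∀ α : Fin (M + 1),
        (∑ β, Complex.I * (n α : ℂ) * Dop (m + n) β f y)
          = Complex.I * (n α : ℂ) * ∑ β, Dop (m + n) β f y := fun α => by
      rw [Finset.mul_sum]
    simp only [e1, e2, hmC, mul_zero, zero_mul, Finset.sum_const_zero, sub_zero]
    rw [← Finset.sum_mul, ← Finset.mul_sum, hnC]
    ring

end
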